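/- The fixed field F = K(t)^σ is the field of fractions of the fixed ring 𝓕 = K[t,t⁻¹]^σ: every element of F can be written as g·h⁻¹ with g, h ∈ 𝓕 and h ≠ 0. Moreover K ⊗_k 𝓕 = K[t,t⁻¹]: for any ℓ ∈ K with ι(ℓ) ≠ ℓ, every element of the Laurent polynomial ring K[t,t⁻¹] can be written uniquely as f₀ + ℓ·f₁ with f₀, f₁ ∈ 𝓕. -/

import Mathlib

open scoped TensorProduct

/-- `f` is a Laurent polynomial: a finite sum `Σ y_z · t^z` with `y_z ∈ K`. -/
def IsLaurent {K : Type} [Field K] (f : RatFunc K) : Prop :=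
  ∃ c : ℤ →₀ K, f = c.sum fun z y => algebraMap K (RatFunc K) y * RatFunc.X ^ z

section LaurentAux

variable {K : Type} [Field K]

lemma isLaurent_monomial (y : K) (z : ℤ) :
    IsLaurent (algebraMap K (RatFunc K) y * RatFunc.X ^ z) :=
  ⟨Finsupp.single z y, by rw [Finsupp.sum_single_index (by simp)]⟩

lemma isLaurent_zero : IsLaurent (0 : RatFunc K) :=
  ⟨0, by simp⟩

lemma IsLaurent.add {f g : RatFunc K} (hf : IsLaurent f) (hg : IsLaurent g) :
    IsLaurent (f + g) := by
  obtain ⟨c, rfl⟩ := hf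
  obtain ⟨d, rfl⟩ := hg
  exact ⟨c + d, (Finsupp.sum_add_index' (by simp) (by intro z y₁ y₂; rw [map_add, add_mul])).symm⟩

lemma isLaurent_sum {α : Type*} (s : Finset α) (g : α → RatFunc K)
    (h : ∀ i ∈ s, IsLaurent (g i)) : IsLaurent (∑ i ∈ s, g i) := by
  classical
  induction s using Finset.induction_on with
  | empty => simpa using isLaurent_zero
  | @insert x s hx ih =>
    rw [Finset.sum_insert hx]
    exact (h _ (Finset.mem_insert_self _ _)).add
      (ih fun i hi => h i (Finset.mem_insert_of_mem hi))

lemma IsLaurent.mul {f g : RatFunc K} (hf : IsLaurent f) (hg : IsLaurent g) :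
    IsLaurent (f * g) := by
  obtain ⟨c, rfl⟩ := hf
  obtain ⟨d, rfl⟩ := hg
  rw [Finsupp.sum, Finset.sum_mul]
  refine isLaurent_sum _ _ fun z _ => ?_
  rw [Finsupp.sum, Finset.mul_sum]
  refine isLaurent_sum _ _ fun w _ => ?_
  have : algebraMap K (RatFunc K) (c z) * RatFunc.X ^ z *
      (algebraMap K (RatFunc K) (d w) * RatFunc.X ^ w) =
      algebraMap K (RatFunc K) (c z * d w) * RatFunc.X ^ (z + w) := by
    rw [map_mul, zpow_add₀ RatFunc.X_ne_zero]; ring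
  rw [this]
  exact isLaurent_monomial _ _

lemma IsLaurent.neg {f : RatFunc K} (hf : IsLaurent f) : IsLaurent (-f) := by
  have h := (isLaurent_monomial (-1 : K) 0).mul hf
  simpa using h

lemma IsLaurent.sub {f g : RatFunc K} (hf : IsLaurent f) (hg : IsLaurent g) :
    IsLaurent (f - g) := by
  rw [sub_eq_add_neg]; exact hf.add hg.neg

lemma isLaurent_algebraMap (y : K) : IsLaurent (algebraMap K (RatFunc K) y) := by
  have h := isLaurent_monomial y 0
  simpa using h

lemma isLaurent_poly (p : Polynomial K) :
    IsLaurent (algebraMap (Polynomial K) (RatFunc K) p) := by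
  induction p using Polynomial.induction_on' with
  | add p q hp hq => rw [map_add]; exact hp.add hq
  | monomial n a =>
    rw [← Polynomial.C_mul_X_pow_eq_monomial, map_mul, map_pow, RatFunc.algebraMap_C,
      RatFunc.algebraMap_X, ← zpow_natCast]
    exact isLaurent_monomial _ _

end LaurentAux

theorem F_is_fraction_field_of_fixed_Laurent_ring
    -- k is a field, K/k a degree-2 Galois extension with nontrivial automorphism ι,
    -- b a nonzero element of k
    (k K : Type) [Field k] [Field K] [Algebra k K]
    (hrank : Module.finrank k K = 2)
    (ι : K ≃ₐ[k] K) (hι : ∃ x : K, ι x ≠ x)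
    (hι2 : ∀ x : K, ι (ι x) = x)
    (hfix : ∀ x : K, ι x = x → ∃ c : k, algebraMap k K c = x)
    (b : k) (hb : b ≠ 0)
    -- σ is the automorphism of K(t) acting as ι on K with σ(t) = b·t⁻¹
    (σ : RatFunc K ≃+* RatFunc K)
    (hσK : ∀ x : K, σ (algebraMap K (RatFunc K) x) = algebraMap K (RatFunc K) (ι x))
    (hσt : σ RatFunc.X = algebraMap K (RatFunc K) (algebraMap k K b) * RatFunc.X⁻¹)
    :
    -- F = K(t)^σ is the field of fractions of 𝓕 = K[t,t⁻¹]^σ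
    (∀ f : RatFunc K, σ f = f →
      ∃ g h : RatFunc K, (IsLaurent g ∧ σ g = g) ∧ (IsLaurent h ∧ σ h = h) ∧
        h ≠ 0 ∧ f = g / h) ∧
    -- K ⊗_k 𝓕 = K[t,t⁻¹]: for ℓ ∈ K with ι(ℓ) ≠ ℓ, every Laurent polynomial is
    -- uniquely f₀ + ℓ·f₁ with f₀, f₁ ∈ 𝓕
    (∀ ℓ : K, ι ℓ ≠ ℓ → ∀ f : RatFunc K, IsLaurent f →
      ∃! p : RatFunc K × RatFunc K,
        ((IsLaurent p.1 ∧ σ p.1 = p.1) ∧ (IsLaurent p.2 ∧ σ p.2 = p.2)) ∧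
        f = p.1 + algebraMap K (RatFunc K) ℓ * p.2) := by
  set A := algebraMap K (RatFunc K) with hA
  have hAinj : Function.Injective A := (algebraMap K (RatFunc K)).injective
  set b' : K := algebraMap k K b with hb'def
  have hb'0 : b' ≠ 0 := by
    simp [hb'def, hb]
  have hAb' : A b' ≠ 0 := fun h => hb'0 (hAinj (by rw [h, map_zero]))
  -- σ of X^z
  have hσXz : ∀ z : ℤ, σ (RatFunc.X ^ z) = A (b' ^ z) * RatFunc.X ^ (-z) := by
    intro z
    rw [map_zpow₀, hσt, mul_zpow, map_zpow₀, inv_zpow, ← zpow_neg]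
  -- σ preserves Laurentness
  have hσL : ∀ f : RatFunc K, IsLaurent f → IsLaurent (σ f) := by
    rintro f ⟨c, rfl⟩
    rw [Finsupp.sum, map_sum]
    refine isLaurent_sum _ _ fun z _ => ?_
    rw [map_mul, hσK, hσXz, ← mul_assoc, ← map_mul]
    exact isLaurent_monomial _ _
  -- σ is an involution
  have hσσX : σ (σ RatFunc.X) = RatFunc.X := by
    rw [hσt, map_mul, hσK, map_inv₀, hσt, show ι b' = b' from ι.commutes b,
      mul_inv, inv_inv, ← mul_assoc, mul_inv_cancel₀ hAb', one_mul]
  have hσσpoly : ∀ p : Polynomial K,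
      σ (σ (algebraMap (Polynomial K) (RatFunc K) p)) = algebraMap (Polynomial K) (RatFunc K) p := by
    intro p
    induction p using Polynomial.induction_on' with
    | add p q hp hq => rw [map_add, map_add, map_add, hp, hq]
    | monomial n a =>
      rw [← Polynomial.C_mul_X_pow_eq_monomial, map_mul, map_pow, RatFunc.algebraMap_C,
        RatFunc.algebraMap_X, map_mul, map_mul, map_pow, map_pow]
      rw [show ∀ x : K, σ ((RatFunc.C : K →+* RatFunc K) x) = RatFunc.C (ι x) from hσK,
        show ∀ x : K, σ ((RatFunc.C : K →+* RatFunc K) x) = RatFunc.C (ι x) from hσK,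
        hι2, hσσX]
  have hσσ : ∀ f : RatFunc K, σ (σ f) = f := by
    intro f
    conv_lhs => rw [← RatFunc.num_div_denom f]
    rw [map_div₀, map_div₀, hσσpoly, hσσpoly, RatFunc.num_div_denom]
  constructor
  · -- Part 1
    intro f hf
    set p := algebraMap (Polynomial K) (RatFunc K) f.num with hp
    set q := algebraMap (Polynomial K) (RatFunc K) f.denom with hq
    have hq0 : q ≠ 0 := RatFunc.algebraMap_ne_zero (RatFunc.denom_ne_zero f)
    have hσq0 : σ q ≠ 0 := fun h => hq0 (σ.injective (by rw [h, map_zero]))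
    have hfpq : f = p / q := (RatFunc.num_div_denom f).symm
    have key : σ p * q = p * σ q := by
      have h1 : σ p / σ q = p / q := by
        rw [← map_div₀, ← hfpq, hf, hfpq]
      exact (div_eq_div_iff hσq0 hq0).mp h1
    refine ⟨p * σ q, q * σ q, ⟨(isLaurent_poly _).mul (hσL q (isLaurent_poly _)), ?_⟩,
      ⟨(isLaurent_poly _).mul (hσL q (isLaurent_poly _)), ?_⟩, mul_ne_zero hq0 hσq0, ?_⟩
    · rw [map_mul, hσσ, key]
    · rw [map_mul, hσσ]; ring
    · rw [mul_div_mul_right _ _ hσq0, ← hfpq]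
  · -- Part 2
    intro ℓ hℓ f hf
    have hd : ℓ - ι ℓ ≠ 0 := sub_ne_zero.mpr (Ne.symm hℓ)
    obtain ⟨f₁, hf₁def⟩ : ∃ f₁ : RatFunc K, f₁ = A (ℓ - ι ℓ)⁻¹ * (f - σ f) := ⟨_, rfl⟩
    obtain ⟨f₀, hf₀def⟩ : ∃ f₀ : RatFunc K, f₀ = f - A ℓ * f₁ := ⟨_, rfl⟩
    have hσf : IsLaurent (σ f) := hσL f hf
    have hf₁L : IsLaurent f₁ := by
      rw [hf₁def]; exact (isLaurent_algebraMap _).mul (hf.sub hσf)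
    have hf₀L : IsLaurent f₀ := by
      rw [hf₀def]; exact hf.sub ((isLaurent_algebraMap ℓ).mul hf₁L)
    have hιu : ι (ℓ - ι ℓ)⁻¹ = -(ℓ - ι ℓ)⁻¹ := by
      rw [map_inv₀, map_sub, hι2, show ι ℓ - ℓ = -(ℓ - ι ℓ) by ring, inv_neg]
    have hσf₁ : σ f₁ = f₁ := by
      rw [hf₁def, map_mul, map_sub, hσK, hιu, map_neg, hσσ]
      ring
    have hAu : A (ℓ - ι ℓ) * A (ℓ - ι ℓ)⁻¹ = 1 := by
      rw [← map_mul, mul_inv_cancel₀ hd, map_one]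
    have key2 : (A (ι ℓ) - A ℓ) * f₁ = σ f - f := by
      rw [hf₁def, show A (ι ℓ) - A ℓ = -(A (ℓ - ι ℓ)) by rw [map_sub]; ring]
      calc -(A (ℓ - ι ℓ)) * (A (ℓ - ι ℓ)⁻¹ * (f - σ f))
          = -(A (ℓ - ι ℓ) * A (ℓ - ι ℓ)⁻¹) * (f - σ f) := by ring
        _ = σ f - f := by rw [hAu]; ring
    have hσf₀ : σ f₀ = f₀ := by
      rw [hf₀def, map_sub, map_mul, hσK, hσf₁]
      linear_combination -key2
    have hfeq : f = f₀ + A ℓ * f₁ := by rw [hf₀def]; ring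
    have hAd : A (ℓ - ι ℓ) ≠ 0 := fun h => hd (hAinj (by rw [h, map_zero]))
    refine ⟨(f₀, f₁), ⟨⟨⟨hf₀L, hσf₀⟩, hf₁L, hσf₁⟩, hfeq⟩, ?_⟩
    rintro ⟨g₀, g₁⟩ ⟨⟨⟨hg₀L, hσg₀⟩, hg₁L, hσg₁⟩, hgeq⟩
    have e2 : σ f = g₀ + A (ι ℓ) * g₁ := by
      rw [hgeq, map_add, map_mul, hσK, hσg₀, hσg₁]
    have e3 : σ f = f₀ + A (ι ℓ) * f₁ := by
      rw [hfeq] ; rw [map_add, map_mul, hσK, hσf₀, hσf₁]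
    have h5 : A (ℓ - ι ℓ) * (g₁ - f₁) = 0 := by
      rw [map_sub]
      linear_combination -hgeq + hfeq + e2 - e3
    have h6 : g₁ = f₁ := by
      rcases mul_eq_zero.mp h5 with h | h
      · exact absurd h hAd
      · exact sub_eq_zero.mp h
    have h7 : g₀ = f₀ := by
      rw [h6] at hgeq
      linear_combination hfeq - hgeq
    exact Prod.ext h7 h6
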